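/- Let E : B → A be a conditional expectation with Index E = 2 and set U = 2e_A − 1 in C*⟨B, e_A⟩. Then U is a self-adjoint unitary with U² = 1, and U b U* = 2E(b) − b for every b ∈ B. Consequently β = Ad(U)|_B is an automorphism of B of order two with fixed point algebra B^β = A. -/
import Mathlib
set_option linter.unusedSectionVars false
set_option maxHeartbeats 1000000


/- Watatani-style conditional expectations, quasi-bases, and the C*-basic
construction, formalized abstractly. -/

noncomputable section

/-- A conditional expectation of a unital C*-algebra `B` onto a C*-subalgebra `A`. -/
structure CondExp (B : Type*) [NormedRing B] [StarRing B] [NormedAlgebra ℂ B] [StarModule ℂ B]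
    (A : StarSubalgebra ℂ B) where
  toFun : B →ₗ[ℂ] B
  mem_range : ∀ b, toFun b ∈ A
  fixes : ∀ a ∈ A, toFun a = a
  left_mod : ∀ a ∈ A, ∀ b, toFun (a * b) = a * toFun b
  right_mod : ∀ a ∈ A, ∀ b, toFun (b * a) = toFun b * a
  star_map : ∀ b, toFun (star b) = star (toFun b)
  pos : ∀ b, ∃ c, toFun (star b * b) = star c * c

/-- `x` is a quasi-basis for the conditional expectation `E` (with pairs `(x i, (x i)*)`). -/
def IsQuasiBasis {B : Type*} [NormedRing B] [StarRing B] [NormedAlgebra ℂ B] [StarModule ℂ B]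
    {A : StarSubalgebra ℂ B} (E : CondExp B A) {n : ℕ} (x : Fin n → B) : Prop :=
  (∀ b, ∑ i, x i * E.toFun (star (x i) * b) = b) ∧
  (∀ b, ∑ i, E.toFun (b * x i) * star (x i) = b)

/-- The C*-basic construction `C = C*⟨B, e_A⟩` of a conditional expectation `E : B → A`,
with Jones projection `e`. -/
structure BasicConstruction {B : Type*} [NormedRing B] [StarRing B] [NormedAlgebra ℂ B] [StarModule ℂ B]
    {A : StarSubalgebra ℂ B} (E : CondExp B A)
    (C : Type*) [NormedRing C] [StarRing C] [NormedAlgebra ℂ C] [StarModule ℂ C] where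
  ι : B →⋆ₐ[ℂ] C
  inj : Function.Injective ι
  e : C
  e_star : star e = e
  e_idem : e * e = e
  jones : ∀ b, e * ι b * e = ι (E.toFun b) * e
  dense : (Submodule.span ℂ {y : C | ∃ b c : B, y = ι b * e * ι c}).topologicalClosure = ⊤
  mul_e_inj : ∀ b : B, ι b * e = 0 → b = 0

namespace IndexTwoAux

variable {B C : Type*} [NormedRing B] [StarRing B] [CStarRing B] [NormedAlgebra ℂ B]
    [StarModule ℂ B] [CompleteSpace B]
    [NormedRing C] [StarRing C] [CStarRing C] [NormedAlgebra ℂ C]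
    [StarModule ℂ C] [CompleteSpace C]
    {A : StarSubalgebra ℂ B} {E : CondExp B A}

lemma ann_left (bc : BasicConstruction E C) (z : C)
    (h : ∀ c d : B, z * (bc.ι c * bc.e * bc.ι d) = 0) : z = 0 := by
  set L : C →L[ℂ] C := ContinuousLinearMap.mul ℂ C z with hL
  have hker : Submodule.span ℂ {y : C | ∃ b c : B, y = bc.ι b * bc.e * bc.ι c}
      ≤ LinearMap.ker (L : C →ₗ[ℂ] C) := by
    rw [Submodule.span_le]
    rintro y ⟨b, c, rfl⟩
    simpa [hL] using h b c
  have hcl := Submodule.topologicalClosure_minimal _ hker ?_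
  · rw [bc.dense] at hcl
    have h1 : (1 : C) ∈ LinearMap.ker (L : C →ₗ[ℂ] C) := hcl trivial
    simpa [hL] using h1
  · exact ContinuousLinearMap.isClosed_ker L

variable (bc : BasicConstruction E C)

lemma eW (w : C) : bc.e * (bc.e * w) = bc.e * w := by
  rw [← mul_assoc, bc.e_idem]

lemma jonesW (b : B) (w : C) :
    bc.e * (bc.ι b * (bc.e * w)) = bc.ι (E.toFun b) * (bc.e * w) := by
  have := congrArg (· * w) (bc.jones b)
  simpa [mul_assoc] using this

lemma jones3 (b : B) : bc.e * (bc.ι b * bc.e) = bc.ι (E.toFun b) * bc.e := by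
  simpa [mul_assoc] using bc.jones b

/-- product of two generators -/
lemma melt (a b c d : B) :
    (bc.ι a * bc.e * bc.ι b) * (bc.ι c * bc.e * bc.ι d)
      = bc.ι (a * E.toFun (b * c)) * bc.e * bc.ι d := by
  have h : bc.e * (bc.ι (b * c) * bc.e) = bc.ι (E.toFun (b*c)) * bc.e := jones3 bc _
  calc (bc.ι a * bc.e * bc.ι b) * (bc.ι c * bc.e * bc.ι d)
      = bc.ι a * (bc.e * (bc.ι (b*c) * bc.e)) * bc.ι d := by
        simp only [map_mul, mul_assoc]
    _ = bc.ι a * (bc.ι (E.toFun (b*c)) * bc.e) * bc.ι d := by rw [h]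
    _ = bc.ι (a * E.toFun (b * c)) * bc.e * bc.ι d := by simp only [map_mul, mul_assoc]

lemma p_one {n : ℕ} {x : Fin n → B} (hx : IsQuasiBasis E x) :
    ∑ i, bc.ι (x i) * bc.e * bc.ι (star (x i)) = 1 := by
  rw [← sub_eq_zero]
  apply ann_left bc
  intro c d
  rw [sub_mul, one_mul, Finset.sum_mul, sub_eq_zero]
  calc ∑ i, (bc.ι (x i) * bc.e * bc.ι (star (x i))) * (bc.ι c * bc.e * bc.ι d)
      = ∑ i, bc.ι (x i * E.toFun (star (x i) * c)) * bc.e * bc.ι d := by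
        refine Finset.sum_congr rfl fun i _ => ?_
        rw [melt]
    _ = (∑ i, bc.ι (x i * E.toFun (star (x i) * c))) * bc.e * bc.ι d := by
        rw [Finset.sum_mul, Finset.sum_mul]
    _ = bc.ι c * bc.e * bc.ι d := by rw [← map_sum]; simp only [mul_assoc]; rw [hx.1 c]

lemma two_smul_cancel {X Y : B} (h : (2:ℂ)⁻¹ • X = (2:ℂ)⁻¹ • Y) : X = Y := by
  have h2 := congrArg (fun z => (2:ℂ) • z) h
  simpa [smul_smul, mul_inv_cancel₀ (by norm_num : (2:ℂ) ≠ 0)] using h2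

lemma mul_two_eq_two_smul (b : B) : b * 2 = (2:ℂ) • b := by
  rw [mul_two, two_smul]

lemma Et_iota {n : ℕ} {x : Fin n → B} (hx : IsQuasiBasis E x)
    (hidx : ∑ i, x i * star (x i) = (2 : B))
    (Et : C →ₗ[ℂ] B)
    (hEt : ∀ b c : B, Et (bc.ι b * bc.e * bc.ι c) = ((2 : ℂ))⁻¹ • (b * c)) (b : B) :
    Et (bc.ι b) = b := by
  have h : bc.ι b = ∑ i, bc.ι (b * x i) * bc.e * bc.ι (star (x i)) := by
    calc bc.ι b = bc.ι b * 1 := (mul_one _).symm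
      _ = bc.ι b * ∑ i, bc.ι (x i) * bc.e * bc.ι (star (x i)) := by rw [p_one bc hx]
      _ = ∑ i, bc.ι (b * x i) * bc.e * bc.ι (star (x i)) := by
          rw [Finset.mul_sum]
          refine Finset.sum_congr rfl fun i _ => ?_
          simp only [map_mul, mul_assoc]
  rw [h, map_sum]
  have h2 : ∀ i : Fin n, Et (bc.ι (b * x i) * bc.e * bc.ι (star (x i)))
      = (2:ℂ)⁻¹ • (b * (x i * star (x i))) := by
    intro i; rw [hEt]; rw [mul_assoc]
  rw [Finset.sum_congr rfl fun i _ => h2 i, ← Finset.smul_sum, ← Finset.mul_sum, hidx,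
    mul_two_eq_two_smul, smul_smul]
  norm_num

lemma Et_e_iota {n : ℕ} {x : Fin n → B} (hx : IsQuasiBasis E x)
    (Et : C →ₗ[ℂ] B)
    (hEt : ∀ b c : B, Et (bc.ι b * bc.e * bc.ι c) = ((2 : ℂ))⁻¹ • (b * c)) (b : B) :
    Et (bc.e * bc.ι b) = (2:ℂ)⁻¹ • b := by
  have h : bc.e * bc.ι b = ∑ i, bc.ι (E.toFun (b * x i)) * bc.e * bc.ι (star (x i)) := by
    calc bc.e * bc.ι b = bc.e * (bc.ι b * 1) := by rw [mul_one]
      _ = bc.e * (bc.ι b * ∑ i, bc.ι (x i) * bc.e * bc.ι (star (x i))) := by rw [p_one bc hx]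
      _ = ∑ i, bc.e * (bc.ι (b * x i) * (bc.e * bc.ι (star (x i)))) := by
          rw [Finset.mul_sum, Finset.mul_sum]
          refine Finset.sum_congr rfl fun i _ => ?_
          simp only [map_mul, mul_assoc]
      _ = ∑ i, bc.ι (E.toFun (b * x i)) * bc.e * bc.ι (star (x i)) := by
          refine Finset.sum_congr rfl fun i _ => ?_
          rw [jonesW, mul_assoc]
  rw [h, map_sum]
  have h2 : ∀ i : Fin n, Et (bc.ι (E.toFun (b * x i)) * bc.e * bc.ι (star (x i)))
      = (2:ℂ)⁻¹ • (E.toFun (b * x i) * star (x i)) := fun i => hEt _ _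
  rw [Finset.sum_congr rfl fun i _ => h2 i, ← Finset.smul_sum, hx.2 b]

lemma E_idem (E : CondExp B A) (b : B) : E.toFun (E.toFun b) = E.toFun b :=
  E.fixes _ (E.mem_range b)

lemma E_fix_mul (E : CondExp B A) (b c : B) :
    E.toFun (E.toFun b * E.toFun c) = E.toFun b * E.toFun c :=
  E.fixes _ (mul_mem (E.mem_range b) (E.mem_range c))

lemma E_right (E : CondExp B A) (b c : B) :
    E.toFun (b * E.toFun c) = E.toFun b * E.toFun c :=
  E.right_mod _ (E.mem_range c) b

lemma E_left (E : CondExp B A) (b c : B) :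
    E.toFun (E.toFun b * c) = E.toFun b * E.toFun c :=
  E.left_mod _ (E.mem_range b) c

section Order

variable [PartialOrder B] [StarOrderedRing B]

lemma E_nonneg {z : B} (hz : 0 ≤ z) : 0 ≤ E.toFun z := by
  rw [StarOrderedRing.nonneg_iff] at hz
  refine AddSubmonoid.closure_induction ?_ ?_ ?_ hz
  · rintro w ⟨s, rfl⟩
    obtain ⟨c, hc⟩ := E.pos s
    rw [hc]
    exact star_mul_self_nonneg c
  · simp
  · intro u v _ _ h1 h2
    rw [map_add]
    exact add_nonneg h1 h2

lemma E_mono {z₁ z₂ : B} (h : z₁ ≤ z₂) : E.toFun z₁ ≤ E.toFun z₂ := by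
  rw [← sub_nonneg] at h ⊢
  rw [← map_sub]
  exact E_nonneg h

lemma E_ks (y : B) : star (E.toFun y) * E.toFun y ≤ E.toFun (star y * y) := by
  obtain ⟨c, hc⟩ := E.pos (y - E.toFun y)
  have expand : E.toFun (star (y - E.toFun y) * (y - E.toFun y))
      = E.toFun (star y * y) - star (E.toFun y) * E.toFun y := by
    have h1 : star (y - E.toFun y) * (y - E.toFun y)
        = star y * y - star y * E.toFun y - star (E.toFun y) * y
          + star (E.toFun y) * E.toFun y := by
      rw [star_sub]; noncomm_ring
    rw [h1, map_add, map_sub, map_sub]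
    have h2 : E.toFun (star y * E.toFun y) = star (E.toFun y) * E.toFun y := by
      rw [E_right, E.star_map]
    have h3 : E.toFun (star (E.toFun y) * y) = star (E.toFun y) * E.toFun y := by
      rw [← E.star_map, E_left, E.star_map]
    have h4 : E.toFun (star (E.toFun y) * E.toFun y) = star (E.toFun y) * E.toFun y := by
      rw [← E.star_map, E_fix_mul]
    rw [h2, h3, h4]
    abel
  have hpos : (0:B) ≤ E.toFun (star y * y) - star (E.toFun y) * E.toFun y := by
    rw [← expand, hc]
    exact star_mul_self_nonneg c
  exact sub_nonneg.mp hpos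

end Order

section Order2

variable [PartialOrder B] [StarOrderedRing B]

lemma E_faithful {n : ℕ} {x : Fin n → B} (hx : IsQuasiBasis E x)
    {v : B} (hv : E.toFun (star v * v) = 0) : v = 0 := by
  letI : CStarAlgebra B :=
    { ‹NormedRing B›, ‹StarRing B›, ‹CompleteSpace B›, ‹CStarRing B›,
      ‹NormedAlgebra ℂ B›, ‹StarModule ℂ B› with }
  have key : ∀ i, E.toFun (star (x i) * v) = 0 := by
    intro i
    set y : B := star (x i) * v with hy
    have hsa : IsSelfAdjoint (x i * star (x i)) := IsSelfAdjoint.mul_star_self (x i)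
    have hb : x i * star (x i) ≤ algebraMap ℝ B ‖x i * star (x i)‖ :=
      IsSelfAdjoint.le_algebraMap_norm_self hsa
    have hconj := star_left_conjugate_le_conjugate hb v
    have hrw : star v * algebraMap ℝ B ‖x i * star (x i)‖ * v
        = ‖x i * star (x i)‖ • (star v * v) := by
      rw [Algebra.algebraMap_eq_smul_one, mul_smul_comm, smul_mul_assoc, mul_one]
    have hE1 : E.toFun (star y * y) ≤ 0 := by
      have h1 : star y * y = star v * (x i * star (x i)) * v := by
        rw [hy]; simp only [star_mul, star_star]; noncomm_ring
      have h2 := E_mono (E := E) hconj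
      rw [hrw] at h2
      have h3 : E.toFun (‖x i * star (x i)‖ • (star v * v)) = 0 := by
        rw [LinearMap.map_smul_of_tower, hv, smul_zero]
      rw [h3] at h2
      rw [h1]; exact h2
    have hE2 : (0:B) ≤ E.toFun (star y * y) :=
      E_nonneg (star_mul_self_nonneg y)
    have hE0 : E.toFun (star y * y) = 0 := le_antisymm hE1 hE2
    have hks := E_ks (E := E) y
    rw [hE0] at hks
    have : star (E.toFun y) * E.toFun y = 0 :=
      le_antisymm hks (star_mul_self_nonneg _)
    exact CStarRing.star_mul_self_eq_zero_iff _ |>.mp this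
  have := hx.1 v
  rw [← this]
  simp [key]

end Order2

section Gram

variable {n : ℕ} {x : Fin n → B}

/-- decomposition of the `E`-Gram sum as a sum of `star v * v` terms -/
lemma gram_decomp (hx : IsQuasiBasis E x) {κ : Type*} [Fintype κ] (b d : κ → B) :
    ∑ k, ∑ l, star (d k) * E.toFun (star (b k) * b l) * d l
      = ∑ m, star (∑ j, E.toFun (star (x m) * x j) *
              (∑ k, E.toFun (star (x j) * b k) * d k)) *
            (∑ j, E.toFun (star (x m) * x j) *
              (∑ k, E.toFun (star (x j) * b k) * d k)) := by
  set y : Fin n → κ → B := fun i k => E.toFun (star (x i) * b k) with hy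
  set G : Fin n → Fin n → B := fun i j => E.toFun (star (x i) * x j) with hG
  set w : Fin n → B := fun i => ∑ k, y i k * d k with hw
  set v : Fin n → B := fun m => ∑ j, G m j * w j with hv
  have hyA : ∀ i k, y i k ∈ A := fun i k => E.mem_range _
  -- Claim A
  have hA : ∀ k l, E.toFun (star (b k) * b l)
      = ∑ i, ∑ j, star (y i k) * (G i j * y j l) := by
    intro k l
    have hbl : b l = ∑ j, x j * y j l := (hx.1 (b l)).symm
    have hbk : star (b k) = ∑ i, star (y i k) * star (x i) := by
      conv_lhs => rw [← hx.1 (b k)]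
      rw [star_sum]
      exact Finset.sum_congr rfl fun i _ => star_mul _ _
    calc E.toFun (star (b k) * b l)
        = E.toFun ((∑ i, star (y i k) * star (x i)) * (∑ j, x j * y j l)) := by
          rw [← hbl, ← hbk]
      _ = ∑ i, ∑ j, E.toFun ((star (y i k) * star (x i)) * (x j * y j l)) := by
          simp only [Finset.sum_mul_sum, map_sum]
      _ = ∑ i, ∑ j, star (y i k) * (G i j * y j l) := by
          refine Finset.sum_congr rfl fun i _ => Finset.sum_congr rfl fun j _ => ?_
          have h1 : (star (y i k) * star (x i)) * (x j * y j l)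
              = star (y i k) * ((star (x i) * x j) * y j l) := by noncomm_ring
          rw [h1, E.left_mod _ (star_mem (hyA i k)),
            E.right_mod _ (hyA j l)]
  -- Claim B
  have h1 : ∀ k l, star (d k) * E.toFun (star (b k) * b l) * d l
      = ∑ i, ∑ j, star (y i k * d k) * (G i j * (y j l * d l)) := by
    intro k l
    rw [hA k l]
    simp only [Finset.mul_sum, Finset.sum_mul]
    refine Finset.sum_congr rfl fun i _ => Finset.sum_congr rfl fun j _ => ?_
    simp only [star_mul]
    noncomm_ring
  have hB : ∑ k, ∑ l, star (d k) * E.toFun (star (b k) * b l) * d l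
      = ∑ i, ∑ j, star (w i) * (G i j * w j) := by
    calc ∑ k, ∑ l, star (d k) * E.toFun (star (b k) * b l) * d l
        = ∑ k, ∑ l, ∑ i, ∑ j, star (y i k * d k) * (G i j * (y j l * d l)) :=
          Finset.sum_congr rfl fun k _ => Finset.sum_congr rfl fun l _ => h1 k l
      _ = ∑ k, ∑ i, ∑ l, ∑ j, star (y i k * d k) * (G i j * (y j l * d l)) :=
          Finset.sum_congr rfl fun k _ => Finset.sum_comm
      _ = ∑ i, ∑ k, ∑ l, ∑ j, star (y i k * d k) * (G i j * (y j l * d l)) :=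
          Finset.sum_comm
      _ = ∑ i, ∑ k, ∑ j, ∑ l, star (y i k * d k) * (G i j * (y j l * d l)) :=
          Finset.sum_congr rfl fun i _ => Finset.sum_congr rfl fun k _ => Finset.sum_comm
      _ = ∑ i, ∑ j, ∑ k, ∑ l, star (y i k * d k) * (G i j * (y j l * d l)) :=
          Finset.sum_congr rfl fun i _ => Finset.sum_comm
      _ = ∑ i, ∑ j, star (w i) * (G i j * w j) := by
          refine Finset.sum_congr rfl fun i _ => Finset.sum_congr rfl fun j _ => ?_
          have h6 : star (w i) * (G i j * w j)
              = ∑ k, ∑ l, star (y i k * d k) * (G i j * (y j l * d l)) := by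
            have e1 : star (w i) = ∑ k, star (y i k * d k) := by
              simp only [hw, star_sum]
            have e2 : G i j * w j = ∑ l, G i j * (y j l * d l) := by
              simp only [hw, Finset.mul_sum]
            rw [e1, e2, Finset.sum_mul_sum]
          exact h6.symm
  -- G is a selfadjoint idempotent matrix
  have hC : ∀ i m, star (G i m) = G m i := by
    intro i m
    simp only [hG]
    rw [← E.star_map, star_mul, star_star]
  have hD : ∀ i m, ∑ j, G i j * G j m = G i m := by
    intro i m
    have h2 : ∀ j, G i j * G j m = E.toFun (star (x i) * (x j * G j m)) := by
      intro j
      simp only [hG]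
      rw [← E.right_mod _ (E.mem_range (star (x j) * x m)), mul_assoc]
    rw [Finset.sum_congr rfl fun j _ => h2 j, ← map_sum, ← Finset.mul_sum]
    have h3 : ∑ j, x j * G j m = x m := hx.1 (x m)
    rw [h3]
  -- assemble
  have h4 : ∀ i j, ∑ m, (star (w i) * G i m) * (G m j * w j)
      = star (w i) * (G i j * w j) := by
    intro i j
    have h5 : ∀ m : Fin n, (star (w i) * G i m) * (G m j * w j)
        = star (w i) * ((G i m * G m j) * w j) := fun m => by noncomm_ring
    rw [Finset.sum_congr rfl fun m _ => h5 m, ← Finset.mul_sum, ← Finset.sum_mul, hD i j]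
  have hRHS : ∀ m, star (v m) * v m
      = ∑ i, ∑ j, (star (w i) * G i m) * (G m j * w j) := by
    intro m
    have hsv : star (v m) = ∑ i, star (w i) * G i m := by
      simp only [hv, star_sum]
      exact Finset.sum_congr rfl fun i _ => by rw [star_mul, hC]
    rw [hsv]
    simp only [hv]
    rw [Finset.sum_mul_sum]
  have hE2 : ∑ i, ∑ j, star (w i) * (G i j * w j) = ∑ m, star (v m) * v m := by
    calc ∑ i, ∑ j, star (w i) * (G i j * w j)
        = ∑ i, ∑ j, ∑ m, (star (w i) * G i m) * (G m j * w j) :=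
          Finset.sum_congr rfl fun i _ => Finset.sum_congr rfl fun j _ => (h4 i j).symm
      _ = ∑ i, ∑ m, ∑ j, (star (w i) * G i m) * (G m j * w j) :=
          Finset.sum_congr rfl fun i _ => Finset.sum_comm
      _ = ∑ m, ∑ i, ∑ j, (star (w i) * G i m) * (G m j * w j) := Finset.sum_comm
      _ = ∑ m, star (v m) * v m :=
          Finset.sum_congr rfl fun m _ => (hRHS m).symm
  rw [hB, hE2]

end Gram

section Order3

variable [PartialOrder B] [StarOrderedRing B] {n : ℕ} {x : Fin n → B}

lemma gram_zero (hx : IsQuasiBasis E x) {κ : Type*} [Fintype κ] (b d : κ → B)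
    (h0 : E.toFun (∑ k, ∑ l, star (d k) * E.toFun (star (b k) * b l) * d l) = 0) :
    ∑ k, ∑ l, star (d k) * E.toFun (star (b k) * b l) * d l = 0 := by
  rw [gram_decomp hx b d] at h0 ⊢
  set f : Fin n → B := fun m => ∑ j, E.toFun (star (x m) * x j) *
      (∑ k, E.toFun (star (x j) * b k) * d k) with hf
  rw [map_sum] at h0
  have hnn : ∀ m ∈ (Finset.univ : Finset (Fin n)), (0:B) ≤ E.toFun (star (f m) * f m) := by
    intro m _
    obtain ⟨c, hc⟩ := E.pos (f m)
    rw [hc]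
    exact star_mul_self_nonneg c
  have hz := (Finset.sum_eq_zero_iff_of_nonneg hnn).mp h0
  refine Finset.sum_eq_zero fun m _ => ?_
  have hfm : f m = 0 := E_faithful hx (hz m (Finset.mem_univ m))
  have h2 : star (f m) * f m = 0 := by rw [hfm, mul_zero]
  simpa only [hf] using h2

end Order3

lemma starW (a b : B) :
    star (bc.ι a * bc.e * bc.ι b) = bc.ι (star b) * bc.e * bc.ι (star a) := by
  simp only [star_mul, map_star, bc.e_star, mul_assoc]

section KerSq

variable [PartialOrder B] [StarOrderedRing B]

lemma ker_sq (bc : BasicConstruction E C) {n : ℕ} {x : Fin n → B} (hx : IsQuasiBasis E x)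
    (hidx : ∑ i, x i * star (x i) = (2 : B))
    (Et : C →ₗ[ℂ] B)
    (hEt : ∀ b c : B, Et (bc.ι b * bc.e * bc.ι c) = ((2 : ℂ))⁻¹ • (b * c))
    {u : B} (hu : E.toFun u = 0) : E.toFun (star u * u) = star u * u := by
  have hu' : E.toFun (star u) = 0 := by rw [E.star_map, hu, star_zero]
  set bb : Option (Fin n) → B :=
    fun o => o.elim (-u) (fun i => u * x i - E.toFun (u * x i)) with hbb
  set dd : Option (Fin n) → B := fun o => o.elim 1 (fun i => star (x i)) with hdd
  set t : C := bc.ι u - bc.e * bc.ι u - bc.ι u * bc.e with ht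
  have hS : t = ∑ o : Option (Fin n), bc.ι (bb o) * bc.e * bc.ι (dd o) := by
    have h1 : bc.ι u = ∑ i, bc.ι (u * x i) * bc.e * bc.ι (star (x i)) := by
      calc bc.ι u = bc.ι u * 1 := (mul_one _).symm
        _ = bc.ι u * ∑ i, bc.ι (x i) * bc.e * bc.ι (star (x i)) := by rw [p_one bc hx]
        _ = ∑ i, bc.ι (u * x i) * bc.e * bc.ι (star (x i)) := by
            rw [Finset.mul_sum]
            exact Finset.sum_congr rfl fun i _ => by simp only [map_mul, mul_assoc]
    have h2 : bc.e * bc.ι u = ∑ i, bc.ι (E.toFun (u * x i)) * bc.e * bc.ι (star (x i)) := by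
      calc bc.e * bc.ι u
          = ∑ i, bc.e * (bc.ι (u * x i) * bc.e * bc.ι (star (x i))) := by
            rw [← Finset.mul_sum, ← h1]
        _ = ∑ i, bc.ι (E.toFun (u * x i)) * bc.e * bc.ι (star (x i)) := by
            refine Finset.sum_congr rfl fun i _ => ?_
            simp only [mul_assoc]
            rw [jonesW]
    rw [univ_option, Finset.sum_insertNone]
    have h3 : ∀ i : Fin n, bc.ι (bb (some i)) * bc.e * bc.ι (dd (some i))
        = bc.ι (u * x i) * bc.e * bc.ι (star (x i))
          - bc.ι (E.toFun (u * x i)) * bc.e * bc.ι (star (x i)) := by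
      intro i
      simp only [hbb, hdd, Option.elim, map_sub, sub_mul]
    have h4 : bc.ι (bb none) * bc.e * bc.ι (dd none) = -(bc.ι u * bc.e) := by
      simp only [hbb, hdd, Option.elim, map_neg, map_one, mul_one, neg_mul]
    rw [Finset.sum_congr rfl fun i _ => h3 i, Finset.sum_sub_distrib, ← h1, ← h2, h4, ht]
    abel
  have hTT : star t * t = ∑ o : Option (Fin n), ∑ p : Option (Fin n),
      bc.ι (star (dd o) * E.toFun (star (bb o) * bb p)) * bc.e * bc.ι (dd p) := by
    have hstS : star t = ∑ o : Option (Fin n), bc.ι (star (dd o)) * bc.e * bc.ι (star (bb o)) := by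
      rw [hS, star_sum]
      exact Finset.sum_congr rfl fun o _ => starW bc _ _
    rw [hstS, hS, Finset.sum_mul_sum]
    exact Finset.sum_congr rfl fun o _ => Finset.sum_congr rfl fun p _ => melt bc _ _ _ _
  have hEt1 : Et (star t * t)
      = (2:ℂ)⁻¹ • ∑ o : Option (Fin n), ∑ p : Option (Fin n),
          star (dd o) * E.toFun (star (bb o) * bb p) * dd p := by
    rw [hTT, map_sum]
    have h5 : ∀ o : Option (Fin n),
        Et (∑ p : Option (Fin n), bc.ι (star (dd o) * E.toFun (star (bb o) * bb p)) * bc.e * bc.ι (dd p))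
        = ∑ p : Option (Fin n), (2:ℂ)⁻¹ • (star (dd o) * E.toFun (star (bb o) * bb p) * dd p) := by
      intro o
      rw [map_sum]
      exact Finset.sum_congr rfl fun p _ => hEt _ _
    rw [Finset.sum_congr rfl fun o _ => h5 o]
    simp only [← Finset.smul_sum]
  have hexp : star t * t = bc.ι (star u * u) - bc.ι (star u) * bc.e * bc.ι u
      - bc.ι (star u * u) * bc.e - bc.e * bc.ι (star u * u)
      + bc.ι (E.toFun (star u * u)) * bc.e := by
    have hst : star t = bc.ι (star u) - bc.ι (star u) * bc.e - bc.e * bc.ι (star u) := by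
      rw [ht]
      simp only [star_sub, star_mul, map_star, bc.e_star]
    rw [hst, ht]
    have m11 : bc.ι (star u) * bc.ι u = bc.ι (star u * u) := (map_mul _ _ _).symm
    have m12 : bc.ι (star u) * (bc.e * bc.ι u) = bc.ι (star u) * bc.e * bc.ι u :=
      (mul_assoc _ _ _).symm
    have m13 : bc.ι (star u) * (bc.ι u * bc.e) = bc.ι (star u * u) * bc.e := by
      rw [← mul_assoc, ← map_mul]
    have m21 : bc.ι (star u) * bc.e * bc.ι u = bc.ι (star u) * bc.e * bc.ι u := rfl
    have m22 : bc.ι (star u) * bc.e * (bc.e * bc.ι u) = bc.ι (star u) * bc.e * bc.ι u := by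
      simp only [mul_assoc, eW]
    have m23 : bc.ι (star u) * bc.e * (bc.ι u * bc.e) = 0 := by
      simp only [mul_assoc, jones3, hu, map_zero, zero_mul, mul_zero]
    have m31 : bc.e * bc.ι (star u) * bc.ι u = bc.e * bc.ι (star u * u) := by
      rw [mul_assoc, ← map_mul]
    have m32 : bc.e * bc.ι (star u) * (bc.e * bc.ι u) = 0 := by
      simp only [mul_assoc, jonesW, hu', map_zero, zero_mul, mul_zero]
    have m33 : bc.e * bc.ι (star u) * (bc.ι u * bc.e) = bc.ι (E.toFun (star u * u)) * bc.e := by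
      rw [mul_assoc, ← mul_assoc (bc.ι (star u)), ← map_mul, jones3]
    simp only [sub_mul, mul_sub]
    rw [m11, m12, m13, m22, m23, m31, m32, m33]
    abel
  have hEt2 : Et (star t * t) = (2:ℂ)⁻¹ • (E.toFun (star u * u) - star u * u) := by
    rw [hexp, map_add, map_sub, map_sub, map_sub]
    rw [Et_iota bc hx hidx Et hEt, hEt (star u) u]
    rw [show bc.ι (star u * u) * bc.e = bc.ι (star u * u) * bc.e * bc.ι 1 by
      rw [map_one, mul_one]]
    rw [hEt (star u * u) 1, mul_one]
    rw [Et_e_iota bc hx Et hEt]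
    rw [show bc.ι (E.toFun (star u * u)) * bc.e = bc.ι (E.toFun (star u * u)) * bc.e * bc.ι 1 by
      rw [map_one, mul_one]]
    rw [hEt _ 1, mul_one]
    module
  have hSig : ∑ o : Option (Fin n), ∑ p : Option (Fin n),
      star (dd o) * E.toFun (star (bb o) * bb p) * dd p
      = E.toFun (star u * u) - star u * u := by
    apply two_smul_cancel (B := B)
    rw [← hEt1, hEt2]
  have hESig : E.toFun (∑ o : Option (Fin n), ∑ p : Option (Fin n),
      star (dd o) * E.toFun (star (bb o) * bb p) * dd p) = 0 := by
    rw [hSig, map_sub, E_idem, sub_self]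
  have hz := gram_zero hx bb dd hESig
  rw [hz] at hSig
  exact sub_eq_zero.mp hSig.symm

end KerSq

lemma two_smul_cancel' {X Y : B} (h : (2:ℂ) • X = (2:ℂ) • Y) : X = Y := by
  have h2 := congrArg (fun z => (2:ℂ)⁻¹ • z) h
  simpa [smul_smul, inv_mul_cancel₀ (by norm_num : (2:ℂ) ≠ 0)] using h2

lemma I_smul_cancel {X Y : B} (h : Complex.I • X = Complex.I • Y) : X = Y := by
  have h2 := congrArg (fun z => (Complex.I)⁻¹ • z) h
  simpa [smul_smul, inv_mul_cancel₀ Complex.I_ne_zero] using h2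

section KerMul

variable [PartialOrder B] [StarOrderedRing B]

lemma ker_mul (bc : BasicConstruction E C) {n : ℕ} {x : Fin n → B} (hx : IsQuasiBasis E x)
    (hidx : ∑ i, x i * star (x i) = (2 : B))
    (Et : C →ₗ[ℂ] B)
    (hEt : ∀ b c : B, Et (bc.ι b * bc.e * bc.ι c) = ((2 : ℂ))⁻¹ • (b * c))
    {u v : B} (hu : E.toFun u = 0) (hv : E.toFun v = 0) :
    E.toFun (u * v) = u * v := by
  have hw : E.toFun (star u) = 0 := by rw [E.star_map, hu, star_zero]
  set w := star u with hwdef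
  have hww : E.toFun (star w * w) = star w * w := ker_sq bc hx hidx Et hEt hw
  have hvv : E.toFun (star v * v) = star v * v := ker_sq bc hx hidx Et hEt hv
  -- first polarization
  have hz1 : E.toFun (w + v) = 0 := by rw [map_add, hw, hv, add_zero]
  have h1 := ker_sq bc hx hidx Et hEt hz1
  have e1 : star (w + v) * (w + v)
      = star w * w + (star w * v + (star v * w + star v * v)) := by
    rw [star_add]; noncomm_ring
  rw [e1, map_add, map_add, map_add, hww, hvv] at h1
  have hA : E.toFun (star w * v) + E.toFun (star v * w) = star w * v + star v * w := by
    have h2 := add_left_cancel h1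
    rw [← add_assoc, ← add_assoc] at h2
    exact add_right_cancel h2
  -- second polarization
  have hz2 : E.toFun (w + Complex.I • v) = 0 := by
    rw [map_add, map_smul, hw, hv, smul_zero, add_zero]
  have h2 := ker_sq bc hx hidx Et hEt hz2
  have e2 : star (w + Complex.I • v) * (w + Complex.I • v)
      = star w * w + (Complex.I • (star w * v)
        + ((-Complex.I) • (star v * w) + star v * v)) := by
    have hc : star (Complex.I • v) = (-Complex.I) • star v := by
      rw [star_smul, Complex.star_def, Complex.conj_I]
    rw [star_add, hc, add_mul, mul_add, mul_add]
    rw [mul_smul_comm, smul_mul_assoc, smul_mul_assoc, mul_smul_comm, smul_smul]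
    have hii : (-Complex.I) * Complex.I = 1 := by
      rw [neg_mul, Complex.I_mul_I, neg_neg]
    rw [hii, one_smul]
    abel
  rw [e2, map_add, map_add, map_add, map_smul, map_smul, hww, hvv] at h2
  have hB : Complex.I • E.toFun (star w * v) + (-Complex.I) • E.toFun (star v * w)
      = Complex.I • (star w * v) + (-Complex.I) • (star v * w) := by
    have h3 := add_left_cancel h2
    rw [← add_assoc, ← add_assoc] at h3
    exact add_right_cancel h3
  have hPQ : E.toFun (star w * v) - E.toFun (star v * w) = star w * v - star v * w := by
    apply I_smul_cancel (B := B)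
    rw [smul_sub, smul_sub]
    simpa [neg_smul, sub_eq_add_neg] using hB
  have h5 : E.toFun (star w * v) + E.toFun (star w * v) = star w * v + star w * v := by
    calc E.toFun (star w * v) + E.toFun (star w * v)
        = (E.toFun (star w * v) + E.toFun (star v * w))
          + (E.toFun (star w * v) - E.toFun (star v * w)) := by abel
      _ = (star w * v + star v * w) + (star w * v - star v * w) := by rw [hA, hPQ]
      _ = star w * v + star w * v := by abel
  have h7 : E.toFun (star w * v) = star w * v := by
    apply two_smul_cancel' (B := B)
    rw [two_smul, two_smul]
    exact h5
  rw [hwdef, star_star] at h7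
  exact h7

end KerMul

end IndexTwoAux

open IndexTwoAux

/-- `U = 2e_A − 1` is a self-adjoint unitary with `U² = 1`,
`U b U* = 2E(b) − b`, and `β = Ad(U)|_B` is an order-two automorphism of `B`
with fixed point algebra `A`. -/
theorem unitary_two_eA_sub_one
    {B C : Type*} [NormedRing B] [StarRing B] [CStarRing B] [NormedAlgebra ℂ B]
    [StarModule ℂ B] [CompleteSpace B]
    [NormedRing C] [StarRing C] [CStarRing C] [NormedAlgebra ℂ C]
    [StarModule ℂ C] [CompleteSpace C]
    {A : StarSubalgebra ℂ B} (E : CondExp B A)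
    {n : ℕ} (x : Fin n → B) (hx : IsQuasiBasis E x)
    (hidx : ∑ i, x i * star (x i) = (2 : B))
    (bc : BasicConstruction E C)
    (Et : C →ₗ[ℂ] B)
    (hEt : ∀ b c : B, Et (bc.ι b * bc.e * bc.ι c) = ((2 : ℂ))⁻¹ • (b * c))
    (U : C) (hU : U = 2 * bc.e - 1) :
    star U = U ∧
    U * U = 1 ∧
    (∀ b : B, U * bc.ι b * star U = bc.ι (2 * E.toFun b - b)) ∧
    -- β(b) = 2E(b) − b maps B into B and has order two
    (∀ b : B, 2 * E.toFun (2 * E.toFun b - b) - (2 * E.toFun b - b) = b) ∧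
    -- the fixed point algebra of β is A
    (∀ b : B, 2 * E.toFun b - b = b ↔ b ∈ A) := by

  letI : CStarAlgebra B :=
    { ‹NormedRing B›, ‹StarRing B›, ‹CompleteSpace B›, ‹CStarRing B›,
      ‹NormedAlgebra ℂ B›, ‹StarModule ℂ B› with }
  letI : PartialOrder B := CStarAlgebra.spectralOrder B
  haveI : StarOrderedRing B := CStarAlgebra.spectralOrderedRing B
  -- bullet 1
  have hstar : star U = U := by
    rw [hU]
    simp only [star_sub, star_one, star_mul, bc.e_star, star_ofNat]
    rw [mul_two, two_mul]
  -- bullet 2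
  have hsq : U * U = 1 := by
    rw [hU]
    rw [show (2:C) * bc.e = bc.e + bc.e from two_mul _]
    simp only [sub_mul, mul_sub, add_mul, mul_add, mul_one, one_mul, bc.e_idem]
    abel
  -- the key one-sided computation
  have hstep : ∀ c d : B, U * (bc.ι c * bc.e * bc.ι d)
      = bc.ι (2 * E.toFun c - c) * bc.e * bc.ι d := by
    intro c d
    have hj : bc.e * (bc.ι c * bc.e * bc.ι d) = bc.ι (E.toFun c) * bc.e * bc.ι d := by
      simp only [mul_assoc]
      rw [jonesW]
    have h2 : bc.ι (2 * E.toFun c - c)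
        = bc.ι (E.toFun c) + bc.ι (E.toFun c) - bc.ι c := by
      rw [map_sub, map_mul, map_ofNat, two_mul]
    rw [hU, sub_mul, one_mul]
    rw [show (2:C) * bc.e = bc.e + bc.e from two_mul _]
    rw [add_mul, hj, h2]
    simp only [sub_mul, add_mul]
  -- bullet 3 (conjugation formula)
  have hconj : ∀ b : B, U * bc.ι b * U = bc.ι (2 * E.toFun b - b) := by
    intro b
    rw [← sub_eq_zero]
    apply ann_left bc
    intro c d
    rw [sub_mul]
    have h1 : U * bc.ι b * U * (bc.ι c * bc.e * bc.ι d)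
        = bc.ι (2 * E.toFun (b * (2 * E.toFun c - c)) - b * (2 * E.toFun c - c))
            * bc.e * bc.ι d := by
      calc U * bc.ι b * U * (bc.ι c * bc.e * bc.ι d)
          = U * (bc.ι b * (U * (bc.ι c * bc.e * bc.ι d))) := by
            simp only [mul_assoc]
        _ = U * (bc.ι b * (bc.ι (2 * E.toFun c - c) * bc.e * bc.ι d)) := by rw [hstep]
        _ = U * (bc.ι (b * (2 * E.toFun c - c)) * bc.e * bc.ι d) := by
            congr 1
            simp only [← mul_assoc, ← map_mul]
        _ = bc.ι (2 * E.toFun (b * (2 * E.toFun c - c)) - b * (2 * E.toFun c - c))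
              * bc.e * bc.ι d := hstep _ _
    have h2 : bc.ι (2 * E.toFun b - b) * (bc.ι c * bc.e * bc.ι d)
        = bc.ι ((2 * E.toFun b - b) * c) * bc.e * bc.ι d := by
      simp only [← mul_assoc, ← map_mul]
    rw [h1, h2]
    have hq : 2 * E.toFun (b * (2 * E.toFun c - c)) - b * (2 * E.toFun c - c)
        = (2 * E.toFun b - b) * c := by
      have f2 : E.toFun (b * (2 * E.toFun c - c))
          = E.toFun b * E.toFun c + E.toFun b * E.toFun c - E.toFun (b * c) := by
        have hr : b * (2 * E.toFun c - c) = b * E.toFun c + b * E.toFun c - b * c := by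
          noncomm_ring
        rw [hr, map_sub, map_add, E_right]
      have hu : E.toFun (b - E.toFun b) = 0 := by
        rw [map_sub, E_idem, sub_self]
      have hv : E.toFun (c - E.toFun c) = 0 := by
        rw [map_sub, E_idem, sub_self]
      have hker := ker_mul bc hx hidx Et hEt hu hv
      have f4 : E.toFun ((b - E.toFun b) * (c - E.toFun c))
          = E.toFun (b * c) - E.toFun b * E.toFun c := by
        have hexp : (b - E.toFun b) * (c - E.toFun c)
            = b * c - b * E.toFun c - E.toFun b * c + E.toFun b * E.toFun c := by
          noncomm_ring
        rw [hexp, map_add, map_sub, map_sub, E_right, E_left, E_fix_mul]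
        abel
      have f5 : E.toFun (b * c)
          = (b - E.toFun b) * (c - E.toFun c) + E.toFun b * E.toFun c := by
        rw [← hker, f4]
        abel
      rw [f2, f5]
      noncomm_ring
    rw [hq, sub_self]
  -- bullet 4
  have b4 : ∀ b : B, 2 * E.toFun (2 * E.toFun b - b) - (2 * E.toFun b - b) = b := by
    intro b
    have h1 : E.toFun (2 * E.toFun b - b) = E.toFun b := by
      have h2 : (2:B) * E.toFun b - b = E.toFun b + E.toFun b - b := by rw [two_mul]
      rw [h2, map_sub, map_add, E_idem]
      abel
    rw [h1]
    noncomm_ring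
  -- bullet 5
  have b5 : ∀ b : B, (2 * E.toFun b - b = b ↔ b ∈ A) := by
    intro b
    constructor
    · intro h
      have h1 : (2:B) * E.toFun b = b + b := eq_add_of_sub_eq h
      rw [two_mul] at h1
      have h2 : (2:ℂ) • E.toFun b = (2:ℂ) • b := by
        rw [two_smul, two_smul]
        exact h1
      have h3 : E.toFun b = b := two_smul_cancel' (B := B) h2
      rw [← h3]
      exact E.mem_range b
    · intro h
      rw [E.fixes b h, two_mul]
      abel
  exact ⟨hstar, hsq, fun b => by rw [hstar]; exact hconj b, b4, b5⟩


end
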